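/- Let A = C(X) be a unital commutative C*-algebra with G a discrete group acting via a minimal action α on the compact Hausdorff space X, and suppose the induced action σ is n-covering (n ≥ 2). Then the action is n-filling: for all b₁,…,bₙ ∈ A₊ with ‖bⱼ‖ = 1 and every ε > 0 there exist g₁,…,gₙ ∈ G with Σⱼ σ_{gⱼ}(bⱼ) ≥ 1 − ε. Conversely, if the action is n-filling and A is not isomorphic to a subalgebra of Mₙ(ℂ), then it is n-covering. -/

import Mathlib

set_option linter.unusedSectionVars false
set_option linter.deprecated false
set_option linter.unnecessarySimpa false

open scoped ComplexOrder

section Aux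

variable {X G : Type*} [TopologicalSpace X] [CompactSpace X] [T2Space X] [Group G]

private lemma aux_one (α : G → X ≃ₜ X) (hα : ∀ g h x, α (g * h) x = α g (α h x)) (x : X) :
    α 1 x = x := by
  have h1 : α (1 * 1 : G) x = α 1 (α 1 x) := hα 1 1 x
  rw [one_mul] at h1
  exact (α 1).injective h1.symm

private lemma aux_symm (α : G → X ≃ₜ X) (hα : ∀ g h x, α (g * h) x = α g (α h x)) (g : G) (x : X) :
    (α g).symm x = α g⁻¹ x := by
  apply (α g).injective
  rw [Homeomorph.apply_symm_apply]
  rw [← hα g g⁻¹ x, mul_inv_cancel, aux_one α hα]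

end Aux

theorem stmt17 {X G : Type*} [TopologicalSpace X] [CompactSpace X] [T2Space X] [Group G]
    (α : G → X ≃ₜ X) (hα : ∀ g h x, α (g * h) x = α g (α h x))
    (hmin : ∀ x : X, Dense (Set.range fun g : G => α g x))
    (n : ℕ) (hn : 2 ≤ n) :
    ((∀ a : C(X, ℂ), (∀ x, 0 ≤ a x) → a ≠ 0 → ∀ ε : ℝ, 0 < ε →
        ∃ (d : Fin n → C(X, ℂ)) (g : Fin n → G),
          ‖(∑ j, star (d j) * a.comp ((α (g j)).symm : C(X, X)) * d j) - 1‖ < ε) →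
      (∀ b : Fin n → C(X, ℂ), (∀ j x, 0 ≤ b j x) → (∀ j, ‖b j‖ = 1) → ∀ ε : ℝ, 0 < ε →
        ∃ g : Fin n → G, ∀ x : X,
          1 - (ε : ℂ) ≤ (∑ j, (b j).comp ((α (g j)).symm : C(X, X))) x)) ∧
    ((∀ b : Fin n → C(X, ℂ), (∀ j x, 0 ≤ b j x) → (∀ j, ‖b j‖ = 1) → ∀ ε : ℝ, 0 < ε →
        ∃ g : Fin n → G, ∀ x : X,
          1 - (ε : ℂ) ≤ (∑ j, (b j).comp ((α (g j)).symm : C(X, X))) x) →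
      ¬ (∃ φ : C(X, ℂ) →⋆ₙₐ[ℂ] Matrix (Fin n) (Fin n) ℂ, Function.Injective φ) →
      (∀ a : C(X, ℂ), (∀ x, 0 ≤ a x) → a ≠ 0 → ∀ ε : ℝ, 0 < ε →
        ∃ (d : Fin n → C(X, ℂ)) (g : Fin n → G),
          ‖(∑ j, star (d j) * a.comp ((α (g j)).symm : C(X, X)) * d j) - 1‖ < ε)) := by
  have hFin : Nonempty (Fin n) := ⟨⟨0, by omega⟩⟩
  constructor
  · -- covering → filling
    intro hcov b hbpos hbnorm ε hε
    -- b j x is real nonneg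
    have him : ∀ j x, (b j x).im = 0 := fun j x => by
      have := (hbpos j x); rw [Complex.le_def] at this; simpa using this.2.symm
    have hre : ∀ j x, 0 ≤ (b j x).re := fun j x => by
      have := (hbpos j x); rw [Complex.le_def] at this; simpa using this.1
    -- X nonempty
    have hXne : Nonempty X := by
      by_contra h
      have : b ⟨0, by omega⟩ = 0 := ContinuousMap.ext fun x => absurd ⟨x⟩ h
      have h0 := hbnorm ⟨0, by omega⟩
      rw [this] at h0; simp at h0
    set δ : ℝ := min ε 1 / 2 with hδdef
    have hδpos : 0 < δ := by positivity
    have hδlt : δ < 1 := by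
      have : min ε 1 ≤ 1 := min_le_right _ _
      simp only [hδdef]; linarith
    have hδε : δ ≤ ε := by
      have : min ε 1 ≤ ε := min_le_left _ _
      simp only [hδdef]; linarith
    -- the open sets U j
    set U : Fin n → Set X := fun j => {x | 1 - δ < (b j x).re} with hU
    have hUopen : ∀ j, IsOpen (U j) := fun j => by
      have : Continuous fun x => (b j x).re := Complex.continuous_re.comp (b j).continuous
      exact isOpen_lt continuous_const this
    have hUne : ∀ j, (U j).Nonempty := by
      intro j
      by_contra h
      rw [Set.not_nonempty_iff_eq_empty, Set.eq_empty_iff_forall_notMem] at h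
      have h' : ∀ x, x ∉ U j := h
      have hle : ∀ x, ‖b j x‖ ≤ 1 - δ := by
        intro x
        have h1 : (b j x).re ≤ 1 - δ := by
          have := h' x; simp only [U, Set.mem_setOf_eq, not_lt] at this; exact this
        have h2 : b j x = ((b j x).re : ℂ) := Complex.ext rfl (by simp [him j x])
        rw [h2]
        simpa [abs_of_nonneg (hre j x)] using h1
      have := ((b j).norm_le (by linarith)).2 hle
      rw [hbnorm j] at this; linarith
    obtain ⟨x₀⟩ := hXne
    have hchoice : ∀ j, ∃ h : G, α h x₀ ∈ U j := by
      intro j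
      obtain ⟨y, ⟨h, rfl⟩, hy⟩ := (hmin x₀).exists_mem_open (hUopen j) (hUne j)
      exact ⟨h, hy⟩
    choose h hh using hchoice
    -- V
    set V : Set X := ⋂ j, (fun y => α (h j) y) ⁻¹' (U j) with hV
    have hVopen : IsOpen V := isOpen_iInter_of_finite fun j =>
      (hUopen j).preimage (α (h j)).continuous
    have hx₀V : x₀ ∈ V := Set.mem_iInter.2 fun j => hh j
    -- Urysohn
    obtain ⟨f, hf0, hf1, hf01⟩ := exists_continuous_zero_one_of_isClosed
      (hVopen.isClosed_compl) (isClosed_singleton (x := x₀))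
      (by simp [Set.disjoint_singleton_right, hx₀V])
    set a : C(X, ℂ) := ⟨fun x => ((f x : ℝ) : ℂ), Complex.continuous_ofReal.comp f.continuous⟩
      with ha
    have hapos : ∀ x, 0 ≤ a x := fun x => by
      rw [Complex.le_def]
      constructor
      · simpa [a] using (hf01 x).1
      · simp [a]
    have hane : a ≠ 0 := by
      intro h0
      have : a x₀ = 0 := by rw [h0]; rfl
      have h1 : f x₀ = 1 := hf1 rfl
      simp only [a, ContinuousMap.coe_mk] at this
      rw [h1] at this
      simpa using this
    have hasupp : ∀ y, a y ≠ 0 → y ∈ V := by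
      intro y hy
      by_contra hyV
      exact hy (by simpa [a] using congrArg (fun r : ℝ => (r : ℂ)) (hf0 hyV))
    obtain ⟨d, g, hdg⟩ := hcov a hapos hane (1/2) one_half_pos
    -- for every x some j has (α (g j)).symm x ∈ V
    have hcover : ∀ x, ∃ j, a ((α (g j)).symm x) ≠ 0 := by
      intro x
      by_contra hall
      push_neg at hall
      set F := (∑ j, star (d j) * a.comp ((α (g j)).symm : C(X, X)) * d j) with hF
      have hFx : F x = 0 := by
        simp only [hF, ContinuousMap.sum_apply, ContinuousMap.mul_apply,
          ContinuousMap.comp_apply, ContinuousMap.coe_coe]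
        refine Finset.sum_eq_zero fun j _ => by rw [hall j]; ring
      have h1 : ‖(F - 1) x‖ ≤ ‖F - 1‖ := (F - 1).norm_coe_le_norm x
      rw [ContinuousMap.sub_apply, ContinuousMap.one_apply, hFx] at h1
      simp only [zero_sub, norm_neg, norm_one] at h1
      linarith [hdg]
    refine ⟨fun j => g j * (h j)⁻¹, fun x => ?_⟩
    obtain ⟨j₀, hj₀⟩ := hcover x
    have hmemV : (α (g j₀)).symm x ∈ V := hasupp _ hj₀
    have hmemU : α (h j₀) ((α (g j₀)).symm x) ∈ U j₀ := Set.mem_iInter.1 hmemV j₀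
    have hkey : (α (g j₀ * (h j₀)⁻¹)).symm x = α (h j₀) ((α (g j₀)).symm x) := by
      rw [aux_symm α hα, mul_inv_rev, inv_inv, hα, ← aux_symm α hα]
    rw [Complex.le_def]
    constructor
    · simp only [Complex.sub_re, Complex.one_re, Complex.ofReal_re,
        ContinuousMap.sum_apply, Complex.re_sum, ContinuousMap.comp_apply,
        ContinuousMap.coe_coe]
      have hbig : 1 - δ < (b j₀ ((α (g j₀ * (h j₀)⁻¹)).symm x)).re := by
        rw [hkey]; exact hmemU
      have hsum : (b j₀ ((α (g j₀ * (h j₀)⁻¹)).symm x)).re ≤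
          ∑ j, (b j ((α (g j * (h j)⁻¹)).symm x)).re :=
        Finset.single_le_sum (f := fun j => (b j ((α (g j * (h j)⁻¹)).symm x)).re)
          (fun j _ => hre j _) (Finset.mem_univ j₀)
      linarith
    · simp only [Complex.sub_im, Complex.one_im, Complex.ofReal_im,
        ContinuousMap.sum_apply, Complex.im_sum, ContinuousMap.comp_apply,
        ContinuousMap.coe_coe]
      symm
      rw [Finset.sum_eq_zero fun j _ => him j _]
      ring
  · -- filling → covering
    intro hfill _ a hapos hane ε hε
    have hna : 0 < ‖a‖ := norm_pos_iff.2 hane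
    set r : ℝ := ‖a‖⁻¹ with hr
    have hrpos : 0 < r := by positivity
    set b : Fin n → C(X, ℂ) := fun _ => r • a with hb
    have hbpos : ∀ j x, 0 ≤ b j x := by
      intro j x
      have := hapos x
      rw [Complex.le_def] at this ⊢
      simp only [hb, ContinuousMap.smul_apply, Complex.smul_re, Complex.smul_im,
        smul_eq_mul]
      constructor
      · have := this.1; simp only [Complex.zero_re] at this; positivity
      · have := this.2; simp only [Complex.zero_im] at this
        simp [← this]
    have hbnorm : ∀ j, ‖b j‖ = 1 := by
      intro j
      simp only [hb, norm_smul, Real.norm_eq_abs, abs_of_pos hrpos, hr]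
      field_simp
      rw [abs_of_pos (one_div_pos.2 hna)]; exact mul_one_div_cancel hna.ne'
    obtain ⟨g, hg⟩ := hfill b hbpos hbnorm (1/2) one_half_pos
    set E : C(X, ℂ) := ∑ j, a.comp ((α (g j)).symm : C(X, X)) with hE
    have hEx : ∀ x, (E x).im = 0 ∧ ‖a‖ / 2 ≤ (E x).re := by
      intro x
      have hx := hg x
      rw [Complex.le_def] at hx
      have hsum : (∑ j, (b j).comp ((α (g j)).symm : C(X, X))) x = (r : ℂ) * E x := by
        simp only [hb, hE, ContinuousMap.sum_apply, ContinuousMap.comp_apply,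
          ContinuousMap.coe_coe, ContinuousMap.smul_apply, Complex.real_smul,
          Finset.mul_sum]
      rw [hsum] at hx
      have him : ((r:ℂ) * E x).im = 0 := by
        have := hx.2.symm
        simpa using this
      have hre : (1:ℝ) - 1/2 ≤ ((r:ℂ) * E x).re := by
        have := hx.1
        simpa using this
      have him2 : (E x).im = 0 := by
        have : r * (E x).im = 0 := by
          simpa [Complex.mul_im] using him
        rcases mul_eq_zero.1 this with h | h
        · exact absurd h (ne_of_gt hrpos)
        · exact h
      have hre2 : r * (E x).re ≥ 1/2 := by
        have : ((r:ℂ) * E x).re = r * (E x).re := by simp [Complex.mul_re, him2]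
        rw [this] at hre; linarith
      refine ⟨him2, ?_⟩
      have : (E x).re ≥ (1/2) / r := (div_le_iff₀' hrpos).2 (by linarith)
      rw [hr] at this
      calc ‖a‖ / 2 = (1/2) / ‖a‖⁻¹ := by field_simp
        _ ≤ (E x).re := this
    have hEre_pos : ∀ x, 0 < (E x).re := fun x => lt_of_lt_of_le (by positivity) (hEx x).2
    have hsqrt_ne : ∀ x, Real.sqrt ((E x).re) ≠ 0 := fun x =>
      ne_of_gt (Real.sqrt_pos.2 (hEre_pos x))
    set d : C(X, ℂ) := ⟨fun x => (((Real.sqrt ((E x).re))⁻¹ : ℝ) : ℂ),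
      Complex.continuous_ofReal.comp ((Real.continuous_sqrt.comp
        (Complex.continuous_re.comp E.continuous)).inv₀ hsqrt_ne)⟩ with hd
    refine ⟨fun _ => d, g, ?_⟩
    have hone : (∑ j, star d * a.comp ((α (g j)).symm : C(X, X)) * d) = 1 := by
      ext x
      simp only [ContinuousMap.sum_apply, ContinuousMap.mul_apply, ContinuousMap.star_apply,
        ContinuousMap.one_apply]
      rw [← Finset.sum_mul, ← Finset.mul_sum]
      have hEsum : (∑ j, (a.comp ((α (g j)).symm : C(X, X))) x) = E x := by
        simp [hE, ContinuousMap.sum_apply]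
      rw [hEsum]
      have hdx : d x = (((Real.sqrt ((E x).re))⁻¹ : ℝ) : ℂ) := rfl
      have hstar : star (d x) = d x := by
        rw [hdx]; exact Complex.conj_ofReal _
      rw [hstar, hdx]
      have hExval : E x = (((E x).re : ℝ) : ℂ) := Complex.ext rfl (by simp [(hEx x).1])
      rw [hExval]
      simp only [Complex.ofReal_re]
      rw [← Complex.ofReal_mul, ← Complex.ofReal_mul, ← Complex.ofReal_one]
      congr 1
      have hs : Real.sqrt ((E x).re) * Real.sqrt ((E x).re) = (E x).re :=
        Real.mul_self_sqrt (hEre_pos x).le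
      have hsne := hsqrt_ne x
      field_simp
      rw [Real.sq_sqrt (hEre_pos x).le]
    rw [hone, sub_self, norm_zero]
    exact hε
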